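/- Let (K,ν) be a valued field and ω a value transcendental extension of ν to K(x) with minimal pair of definition (a,γ); let Q ∈ K[x] be the minimal polynomial of a over K and ω̄ = ν̄_{a,γ} the corresponding common extension of ω and ν̄ to K̄(x). Then the value group of ω is the internal direct sum ωK(x) = ν̄K(a) ⊕ ℤ·ωQ, and the residue field of ω satisfies K(x)ω = K(a)ν̄. -/

import Mathlib

/- ---------------------------------------------------------------------------
Common definitions for formalizing "Minimal pairs, minimal fields and
implicit constant fields" (Dutta).

Valuations are formalized additively, as `AddValuation F (WithTop Γ)` where
`Γ` is a linearly ordered abelian group; the value `⊤` plays the role of the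
value `∞` of `0`.  The algebraic closure `K̄` of `K` is `AlgebraicClosure K`,
the rational function field `K(x)` is `RatFunc K`, and a fixed algebraic
closure of `K̄(x)` (equivalently, of `K(x)`) is
`Lhat K := AlgebraicClosure (RatFunc (AlgebraicClosure K))`.
--------------------------------------------------------------------------- -/

noncomputable section

open Polynomial

namespace VT

/-- The canonical embedding of the rational function field `K(x)` into `K̄(x)`. -/
def liftRF (K : Type) [Field K] : RatFunc K →+* RatFunc (AlgebraicClosure K) :=
  RatFunc.mapRingHom (Polynomial.mapRingHom (algebraMap K (AlgebraicClosure K)))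
    (by
      intro p hp
      simp only [Submonoid.mem_comap, Polynomial.coe_mapRingHom]
      rw [mem_nonZeroDivisors_iff_ne_zero] at hp ⊢
      rw [Ne, Polynomial.map_eq_zero_iff (algebraMap K (AlgebraicClosure K)).injective]
      exact hp)

variable {K : Type} [Field K] {Γ : Type} [AddCommGroup Γ] [LinearOrder Γ] [IsOrderedAddMonoid Γ]

/-- `w` extends the valuation `v` along the field embedding `g`. -/
def Extends {A B : Type} [Field A] [Field B] (g : A →+* B)
    (v : AddValuation A (WithTop Γ)) (w : AddValuation B (WithTop Γ)) : Prop :=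
  ∀ x, w (g x) = v x

/-- `W` is the monomial valuation `ν̄_{a,γ}` on `K̄(x)` attached to `a ∈ K̄` and `γ ∈ Γ`:
on a polynomial `p = Σᵢ cᵢ (x-a)ⁱ` its value is `minᵢ (ν̄ cᵢ + iγ)`.  (A valuation on
`K̄(x)` is determined by its restriction to polynomials.)  In particular `W` extends
the valuation `ν̄ = vbar` of `K̄`. -/
def IsMonomialVal (vbar : AddValuation (AlgebraicClosure K) (WithTop Γ))
    (W : AddValuation (RatFunc (AlgebraicClosure K)) (WithTop Γ))
    (a : AlgebraicClosure K) (γ : Γ) : Prop :=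
  ∀ p : Polynomial (AlgebraicClosure K),
    W (algebraMap (Polynomial (AlgebraicClosure K)) (RatFunc (AlgebraicClosure K)) p) =
      (Finset.range (p.natDegree + 1)).inf
        (fun i => vbar ((Polynomial.taylor a p).coeff i) + i • (γ : WithTop Γ))

/-- The degree `[K(a):K]` of an element `a` of the algebraic closure of `K`. -/
def degOver (K : Type) [Field K] (a : AlgebraicClosure K) : ℕ := (minpoly K a).natDegree

/-- `(a,γ)` is a pair of definition for the valuation `ω` on `K(x)`:  some common
extension of `ω` and `ν̄ = vbar` to `K̄(x)` is the monomial valuation `ν̄_{a,γ}`. -/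
def IsPairOfDef (vbar : AddValuation (AlgebraicClosure K) (WithTop Γ))
    (ω : AddValuation (RatFunc K) (WithTop Γ)) (a : AlgebraicClosure K) (γ : Γ) : Prop :=
  ∃ W : AddValuation (RatFunc (AlgebraicClosure K)) (WithTop Γ),
    IsMonomialVal vbar W a γ ∧ Extends (liftRF K) ω W

/-- `(a,γ)` is a minimal pair of definition for `ω`. -/
def IsMinimalPairOfDef (vbar : AddValuation (AlgebraicClosure K) (WithTop Γ))
    (ω : AddValuation (RatFunc K) (WithTop Γ)) (a : AlgebraicClosure K) (γ : Γ) : Prop :=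
  IsPairOfDef vbar ω a γ ∧
    ∀ b : AlgebraicClosure K, (γ : WithTop Γ) ≤ vbar (a - b) → degOver K a ≤ degOver K b

/-- `(a,γ)` is a pair of definition for the valuation `W` on `K̄(x)`, i.e. `W = ν̄_{a,γ}`,
and it is minimal: `a` has least degree over `K` among all `b` with `ν̄(a-b) ≥ γ`. -/
def IsMinimalPairFor (vbar : AddValuation (AlgebraicClosure K) (WithTop Γ))
    (W : AddValuation (RatFunc (AlgebraicClosure K)) (WithTop Γ))
    (a : AlgebraicClosure K) (γ : Γ) : Prop :=
  IsMonomialVal vbar W a γ ∧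
    ∀ b : AlgebraicClosure K, (γ : WithTop Γ) ≤ vbar (a - b) → degOver K a ≤ degOver K b

/-- The valued field extension `(F|B, w)` (along `φ`) is value transcendental:
the quotient of value groups `wF / w(B)` has rational rank one, i.e. there is a value
which is not torsion modulo the value group of the base, and any two values are
`ℚ`-linearly dependent modulo the value group of the base.  (For the extensions of
valuations from `K` to `K(x)` considered in the paper, the second condition is
automatic, by the Abhyankar inequality.) -/
def IsValueTranscendental {B F : Type} [Field B] [Field F] (φ : B →+* F)
    (w : AddValuation F (WithTop Γ)) : Prop :=
  (∃ (f : F) (γf : Γ), f ≠ 0 ∧ w f = (γf : WithTop Γ) ∧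
      ∀ n : ℤ, n ≠ 0 → ∀ c : B, c ≠ 0 → ((n • γf : Γ) : WithTop Γ) ≠ w (φ c)) ∧
  (∀ (f g : F) (γf γg : Γ), f ≠ 0 → g ≠ 0 → w f = (γf : WithTop Γ) → w g = (γg : WithTop Γ) →
      ∃ m n : ℤ, ¬(m = 0 ∧ n = 0) ∧
        ∃ c : B, c ≠ 0 ∧ ((m • γf + n • γg : Γ) : WithTop Γ) = w (φ c))

/-- The residue of `u` (an element of the valuation ring of `(F,w)`) is transcendental
over the residue field of the subset `S ⊆ F`:  whenever a polynomial expression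
`Σᵢ cᵢ uⁱ` with coefficients `cᵢ ∈ S` of value `≥ 0` has value `> 0`, all the
coefficients have value `> 0` (i.e. residue `0`). -/
def ResidueTransOver {F : Type} [Field F] (w : AddValuation F (WithTop Γ))
    (S : Set F) (u : F) : Prop :=
  ∀ (n : ℕ) (c : ℕ → F), (∀ i ∈ Finset.range (n + 1), c i ∈ S ∧ 0 ≤ w (c i)) →
    0 < w (∑ i ∈ Finset.range (n + 1), c i * u ^ i) →
    ∀ i ∈ Finset.range (n + 1), 0 < w (c i)

/-- The valued field extension `(F|B, w)` (along `φ`) is residue transcendental: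
the residue field extension has transcendence degree one, i.e. some residue is
transcendental over the residue field of the base.  (For the extensions of valuations
from `K` to `K(x)` considered in the paper, transcendence degree `≤ 1` is automatic,
by the Abhyankar inequality.) -/
def IsResidueTranscendental {B F : Type} [Field B] [Field F] (φ : B →+* F)
    (w : AddValuation F (WithTop Γ)) : Prop :=
  ∃ f : F, w f = 0 ∧ ResidueTransOver w (Set.range φ) f

/-- The extension is valuation transcendental: value transcendental or residue
transcendental. -/
def IsValuationTranscendental {B F : Type} [Field B] [Field F] (φ : B →+* F)
    (w : AddValuation F (WithTop Γ)) : Prop :=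
  IsValueTranscendental φ w ∨ IsResidueTranscendental φ w

/-- The value group of the subset `S ⊆ F` under `w`, as a subgroup of `Γ`:
the subgroup { w f | f ∈ S, f ≠ 0 }.  (For `S` a subfield this set is already a
subgroup, so taking the generated subgroup is harmless.) -/
def valueSubgroup {F : Type} [Field F] (w : AddValuation F (WithTop Γ)) (S : Set F) :
    AddSubgroup Γ :=
  AddSubgroup.closure {γ : Γ | ∃ f ∈ S, f ≠ 0 ∧ w f = (γ : WithTop Γ)}

/-- The subsets `S₁, S₂` of the valued field `(F,w)` have the same residues, i.e. they
induce the same residue field inside the residue field of `(F,w)`. -/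
def SameResidues {F : Type} [Field F] (w : AddValuation F (WithTop Γ))
    (S₁ S₂ : Set F) : Prop :=
  (∀ f ∈ S₁, 0 ≤ w f → ∃ g ∈ S₂, 0 ≤ w g ∧ 0 < w (f - g)) ∧
  (∀ g ∈ S₂, 0 ≤ w g → ∃ f ∈ S₁, 0 ≤ w f ∧ 0 < w (g - f))

/-- The residue field of `S₂` has degree `j` over the residue field of `S₁` (both viewed
inside the residue field of `(F,w)`): there are `j` elements of `S₂`, integral for `w`,
whose residues form a basis of the residue field of `S₂` over that of `S₁`. -/
def ResidueDegreeIs {F : Type} [Field F] (w : AddValuation F (WithTop Γ))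
    (S₁ S₂ : Set F) (j : ℕ) : Prop :=
  ∃ g : Fin j → F,
    (∀ i, g i ∈ S₂ ∧ 0 ≤ w (g i)) ∧
    (∀ h ∈ S₂, 0 ≤ w h →
      ∃ c : Fin j → F, (∀ i, c i ∈ S₁ ∧ 0 ≤ w (c i)) ∧ 0 < w (h - ∑ i, c i * g i)) ∧
    (∀ c : Fin j → F, (∀ i, c i ∈ S₁ ∧ 0 ≤ w (c i)) →
      0 < w (∑ i, c i * g i) → ∀ i, 0 < w (c i))

/-- `κ` is the Krasner constant `kras(a,K) = max { ν̄(σa - τa) : σ, τ ∈ Gal(K̄|K), σa ≠ τa }`. -/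
def IsKrasnerConstant (vbar : AddValuation (AlgebraicClosure K) (WithTop Γ))
    (a : AlgebraicClosure K) (κ : WithTop Γ) : Prop :=
  (∃ σ τ : AlgebraicClosure K ≃ₐ[K] AlgebraicClosure K, σ a ≠ τ a ∧ vbar (σ a - τ a) = κ) ∧
  (∀ σ τ : AlgebraicClosure K ≃ₐ[K] AlgebraicClosure K, σ a ≠ τ a → vbar (σ a - τ a) ≤ κ)

/-- `y` is separable algebraic over the subfield `E` of `F`: it is the root of a nonzero
separable polynomial with coefficients in `E`. -/
def SepAlgOver {F : Type} [Field F] (E : Subfield F) (y : F) : Prop :=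
  ∃ p : Polynomial F, p ≠ 0 ∧ (∀ i, p.coeff i ∈ E) ∧ p.Separable ∧ p.eval y = 0

/-- `y` is algebraic over the subfield `E` of `F`. -/
def AlgOver {F : Type} [Field F] (E : Subfield F) (y : F) : Prop :=
  ∃ p : Polynomial F, p ≠ 0 ∧ (∀ i, p.coeff i ∈ E) ∧ p.eval y = 0

/-- The henselization `E^h` of the subfield `E` of the algebraically closed valued field
`(F,Ω)`, realized inside `F` as the decomposition field: the set of elements of `F`
separable algebraic over `E` and fixed by every automorphism of `F` over `E` which
preserves the valuation `Ω`. -/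
def henselizationSet {F : Type} [Field F] (Ω : AddValuation F (WithTop Γ))
    (E : Subfield F) : Set F :=
  {y | SepAlgOver E y ∧
    ∀ σ : F ≃+* F, (∀ e ∈ E, σ e = e) → (∀ z, Ω (σ z) = Ω z) → σ y = y}

/-- A fixed algebraic closure of `K̄(x)`; it is also an algebraic closure of `K(x)`. -/
abbrev Lhat (K : Type) [Field K] : Type := AlgebraicClosure (RatFunc (AlgebraicClosure K))

/-- The canonical embedding `K̄ → Lhat K`. -/
def toL (K : Type) [Field K] : AlgebraicClosure K →+* Lhat K :=
  (algebraMap (RatFunc (AlgebraicClosure K)) (Lhat K)).comp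
    (algebraMap (AlgebraicClosure K) (RatFunc (AlgebraicClosure K)))

/-- The canonical embedding `K(x) → Lhat K`. -/
def kxToL (K : Type) [Field K] : RatFunc K →+* Lhat K :=
  (algebraMap (RatFunc (AlgebraicClosure K)) (Lhat K)).comp (liftRF K)

/-- The subfield `K(x)` of `Lhat K`. -/
def KxSub (K : Type) [Field K] : Subfield (Lhat K) := (kxToL K).fieldRange

/-- The subfield `K` of `Lhat K`. -/
def KSub (K : Type) [Field K] : Subfield (Lhat K) :=
  ((toL K).comp (algebraMap K (AlgebraicClosure K))).fieldRange

/-- The subfield `K(a)` of `Lhat K`, for `a ∈ K̄`. -/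
def KadjSub (K : Type) [Field K] (a : AlgebraicClosure K) : Subfield (Lhat K) :=
  Subfield.closure ((KSub K : Set (Lhat K)) ∪ {toL K a})

/-- The subfield `K(a,x)` of `Lhat K`, for `a ∈ K̄`. -/
def KaxSub (K : Type) [Field K] (a : AlgebraicClosure K) : Subfield (Lhat K) :=
  Subfield.closure ((KxSub K : Set (Lhat K)) ∪ {toL K a})

/-- The implicit constant field `IC(K(x)|K,ω) = K̄ ∩ K(x)^h`, computed inside the fixed
algebraic closure `Lhat K` of `K(x)` with respect to the valuation `Ω` on it. -/
def ICset (K : Type) [Field K] {Γ : Type} [AddCommGroup Γ] [LinearOrder Γ] [IsOrderedAddMonoid Γ]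
    (Ω : AddValuation (Lhat K) (WithTop Γ)) : Set (Lhat K) :=
  Set.range (toL K) ∩ henselizationSet Ω (KxSub K)

/-- `σ` belongs to the absolute inertia group of `(K,ν̄)`:
`ν̄(σc - c) > 0` for every `c` in the valuation ring of `K^sep`. -/
def InInertiaGroup (vbar : AddValuation (AlgebraicClosure K) (WithTop Γ))
    (σ : AlgebraicClosure K ≃ₐ[K] AlgebraicClosure K) : Prop :=
  ∀ c : AlgebraicClosure K, (minpoly K c).Separable → 0 ≤ vbar c → 0 < vbar (σ c - c)

/-- `σ` belongs to the absolute ramification group of `(K,ν̄)`: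
`ν̄(σc - c) > ν̄ c` for every `c ∈ K^sep`, `c ≠ 0`. -/
def InRamificationGroup (vbar : AddValuation (AlgebraicClosure K) (WithTop Γ))
    (σ : AlgebraicClosure K ≃ₐ[K] AlgebraicClosure K) : Prop :=
  ∀ c : AlgebraicClosure K, c ≠ 0 → (minpoly K c).Separable → vbar c < vbar (σ c - c)

/-- The absolute inertia field `K^i` of `(K,ν̄)`, as a subset of `K̄`: the fixed field in
`K^sep` of the absolute inertia group. -/
def inertiaFieldSet (vbar : AddValuation (AlgebraicClosure K) (WithTop Γ)) :
    Set (AlgebraicClosure K) :=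
  {c | (minpoly K c).Separable ∧
    ∀ σ : AlgebraicClosure K ≃ₐ[K] AlgebraicClosure K, InInertiaGroup vbar σ → σ c = c}

/-- The absolute ramification field `K^r` of `(K,ν̄)`, as a subset of `K̄`: the fixed field
in `K^sep` of the absolute ramification group. -/
def ramificationFieldSet (vbar : AddValuation (AlgebraicClosure K) (WithTop Γ)) :
    Set (AlgebraicClosure K) :=
  {c | (minpoly K c).Separable ∧
    ∀ σ : AlgebraicClosure K ≃ₐ[K] AlgebraicClosure K, InRamificationGroup vbar σ → σ c = c}

/-- `(K,ν)` is henselian, i.e. `ν` extends uniquely to `K̄`; equivalently (all extensions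
of `ν` to `K̄` being conjugate), the fixed extension `ν̄` is invariant under `Gal(K̄|K)`. -/
def IsHenselianBase (vbar : AddValuation (AlgebraicClosure K) (WithTop Γ)) : Prop :=
  ∀ σ : AlgebraicClosure K ≃ₐ[K] AlgebraicClosure K, ∀ c, vbar (σ c) = vbar c

/-- `ν` admits a unique extension from `K` to `K(a)`; equivalently, all the conjugate
extensions agree on `K(a)`. -/
def UniqueExtensionOn (vbar : AddValuation (AlgebraicClosure K) (WithTop Γ))
    (a : AlgebraicClosure K) : Prop :=
  ∀ σ : AlgebraicClosure K ≃ₐ[K] AlgebraicClosure K,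
    ∀ b ∈ IntermediateField.adjoin K {a}, vbar (σ b) = vbar b

/-- `succ` is a successor function for the linear order `ι`. -/
def IsSuccFn {ι : Type} [LinearOrder ι] (succ : ι → ι) : Prop :=
  ∀ μ, μ < succ μ ∧ ∀ ρ, μ < ρ → succ μ ≤ ρ

/-- `z` is a pseudo-Cauchy sequence in `(F,v)`. -/
def IsPseudoCauchy {F ι : Type} [Field F] [LinearOrder ι]
    (v : AddValuation F (WithTop Γ)) (z : ι → F) : Prop :=
  ∀ ⦃μ₁ μ₂ μ₃ : ι⦄, μ₁ < μ₂ → μ₂ < μ₃ → v (z μ₁ - z μ₂) < v (z μ₂ - z μ₃)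

/-- `y` (in the valued extension `(F,w)` of `(B,v)` along `φ`) is a limit of the
pseudo-Cauchy sequence `z` in `(B,v)`:  `w(y - z_μ) = v(z_μ - z_{μ+1})` for all `μ`. -/
def IsPCLimit {B F ι : Type} [Field B] [Field F] [LinearOrder ι]
    (succ : ι → ι) (φ : B →+* F)
    (v : AddValuation B (WithTop Γ)) (w : AddValuation F (WithTop Γ))
    (z : ι → B) (y : F) : Prop :=
  ∀ μ : ι, w (y - φ (z μ)) = v (z μ - z (succ μ))

/-- The sequence `s` is ultimately constant. -/
def UltimatelyConstant {ι α : Type} [LinearOrder ι] (s : ι → α) : Prop :=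
  ∃ μ₀, ∀ μ, μ₀ ≤ μ → s μ = s μ₀

/-- The sequence `s` is ultimately (strictly) monotonically increasing. -/
def UltimatelyStrictMono {ι α : Type} [LinearOrder ι] [Preorder α] (s : ι → α) : Prop :=
  ∃ μ₀, ∀ μ₁ μ₂, μ₀ ≤ μ₁ → μ₁ < μ₂ → s μ₁ < s μ₂

/-- The pseudo-Cauchy sequence `z` in `(B,v)` is of transcendental type. -/
def IsTranscendentalType {B ι : Type} [Field B] [LinearOrder ι]
    (v : AddValuation B (WithTop Γ)) (z : ι → B) : Prop :=
  ∀ f : Polynomial B, UltimatelyConstant (fun μ => v (f.eval (z μ)))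

/-- `m` is an associated minimal polynomial of the pseudo-Cauchy sequence `z` of
algebraic type: a monic polynomial of minimal degree such that `(v m(z_μ))_μ` is
ultimately monotonically increasing. -/
def IsAssocMinPoly {B ι : Type} [Field B] [LinearOrder ι]
    (v : AddValuation B (WithTop Γ)) (z : ι → B) (m : Polynomial B) : Prop :=
  m.Monic ∧ UltimatelyStrictMono (fun μ => v (m.eval (z μ))) ∧
    ∀ g : Polynomial B, g.Monic → UltimatelyStrictMono (fun μ => v (g.eval (z μ))) →
      m.natDegree ≤ g.natDegree

/-- `d = δ(f) = max { ω̄(x - c) : c ∈ K̄, f(c) = 0 }`, computed with respect to the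
extension `W = ω̄` of `ω` to `K̄(x)`. -/
def IsDeltaOf (W : AddValuation (RatFunc (AlgebraicClosure K)) (WithTop Γ))
    (f : Polynomial K) (d : WithTop Γ) : Prop :=
  (∃ c : AlgebraicClosure K, Polynomial.aeval c f = 0 ∧
      W (RatFunc.X - algebraMap (AlgebraicClosure K) (RatFunc (AlgebraicClosure K)) c) = d) ∧
  ∀ c : AlgebraicClosure K, Polynomial.aeval c f = 0 →
      W (RatFunc.X - algebraMap (AlgebraicClosure K) (RatFunc (AlgebraicClosure K)) c) ≤ d

/-- `Q` is a key polynomial for `ω` over `K` (with respect to the extension `W = ω̄`,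
on which `δ` does not depend): `Q` is monic and `deg f < deg Q → δ(f) < δ(Q)`. -/
def IsKeyPolynomial (W : AddValuation (RatFunc (AlgebraicClosure K)) (WithTop Γ))
    (Q : Polynomial K) : Prop :=
  Q.Monic ∧ ∀ f : Polynomial K, f.natDegree < Q.natDegree →
    ∀ df dQ : WithTop Γ, IsDeltaOf W f df → IsDeltaOf W Q dQ → df < dQ

/-- `(a,z)` is a distinguished pair over the henselian field `(K,ν̄)`:
`[K(z):K] < [K(a):K]`, `ν̄(a-z) = δ(a,K) = max M(a)`, and `[K(z):K]` is minimal
with these properties. -/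
def IsDistinguishedPair (vbar : AddValuation (AlgebraicClosure K) (WithTop Γ))
    (a z : AlgebraicClosure K) : Prop :=
  degOver K z < degOver K a ∧
  (∀ z' : AlgebraicClosure K, degOver K z' < degOver K a → vbar (a - z') ≤ vbar (a - z)) ∧
  (∀ z' : AlgebraicClosure K, degOver K z' < degOver K a → vbar (a - z') = vbar (a - z) →
      degOver K z ≤ degOver K z')

/-- The extension `(E(x)|E, W)` inside the valued field `(F,W)` is pure, where `x ∈ F`:
(PE1) some `W(x-c)`, `c ∈ E`, is non-torsion modulo the value group of `E`, or
(PE2) some `b(x-c)`, `b,c ∈ E`, has value `0` and residue transcendental over the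
residue field of `E`, or (PE3) `x` is the limit of a pseudo-Cauchy sequence of
transcendental type in `(E,W)`. -/
def IsPureExt {F : Type} [Field F] (W : AddValuation F (WithTop Γ))
    (E : Subfield F) (x : F) : Prop :=
  (∃ c ∈ E, ∃ γ : Γ, W (x - c) = (γ : WithTop Γ) ∧
      ∀ n : ℤ, n ≠ 0 → ∀ b ∈ E, b ≠ 0 → ((n • γ : Γ) : WithTop Γ) ≠ W b) ∨
  (∃ b ∈ E, ∃ c ∈ E, W (b * (x - c)) = 0 ∧ ResidueTransOver W (E : Set F) (b * (x - c))) ∨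
  (∃ (ι : Type) (_ : LinearOrder ι) (succ : ι → ι), Nonempty ι ∧ IsSuccFn succ ∧
      ∃ z : ι → F, (∀ μ, z μ ∈ E) ∧ IsPseudoCauchy W z ∧
        (∀ p : Polynomial F, (∀ i, p.coeff i ∈ E) →
          UltimatelyConstant fun μ => W (p.eval (z μ))) ∧
        IsPCLimit succ (RingHom.id F) W W z x)

/-- The extension `(E(x)|E, W)` is weakly pure: it is pure, or some `b(x-c)^e` with
`b,c ∈ E`, `e ∈ ℕ`, has value `0` and residue transcendental over the residue field
of `E`. -/
def IsWeaklyPureExt {F : Type} [Field F] (W : AddValuation F (WithTop Γ))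
    (E : Subfield F) (x : F) : Prop :=
  IsPureExt W E x ∨
    ∃ b ∈ E, ∃ c ∈ E, ∃ e : ℕ, W (b * (x - c) ^ e) = 0 ∧
      ResidueTransOver W (E : Set F) (b * (x - c) ^ e)




section Aux

variable {Γ : Type} [AddCommGroup Γ] [LinearOrder Γ] [IsOrderedAddMonoid Γ]

lemma coe_nsmul (i : ℕ) (γ : Γ) : (i • (γ : WithTop Γ)) = ((i • γ : Γ) : WithTop Γ) := by
  induction i with
  | zero => simp
  | succ n ih => rw [succ_nsmul, succ_nsmul, WithTop.coe_add, ih]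

lemma coe_neg' (γ : Γ) : ((-γ : Γ) : WithTop Γ) = -(γ : WithTop Γ) := by
  rfl

section AV
variable {F : Type} [Field F] (v : AddValuation F (WithTop Γ))

lemma av_ne_top {c : F} (hc : c ≠ 0) : v c ≠ ⊤ := by
  intro h
  have h1 : v (c * c⁻¹) = ⊤ := by rw [v.map_mul, h]; simp
  rw [mul_inv_cancel₀ hc, v.map_one] at h1
  exact (by simp : (0 : WithTop Γ) ≠ ⊤) h1

lemma av_exists_coe {c : F} (hc : c ≠ 0) : ∃ u : Γ, v c = (u : WithTop Γ) := by
  rcases WithTop.ne_top_iff_exists.mp (av_ne_top v hc) with ⟨u, hu⟩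
  exact ⟨u, hu.symm⟩

lemma av_eq_zero_of_top (h : v 0 = ⊤) : True := trivial

lemma av_add_of_lt {x y : F} (h : v x < v y) : v (x + y) = v x := by
  have hge : v x ≤ v (x + y) := le_trans (le_min le_rfl h.le) (v.map_add x y)
  refine le_antisymm ?_ hge
  have h2 : min (v (x + y)) (v y) ≤ v x := by
    have h3 := v.map_sub (x + y) y
    rwa [add_sub_cancel_right] at h3
  rcases min_le_iff.mp h2 with h3 | h3
  · exact h3
  · exact absurd (lt_of_lt_of_le h h3) (lt_irrefl _)

lemma av_add_ne {x y : F} (h : v x ≠ v y) : v (x + y) = min (v x) (v y) := by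
  rcases lt_or_gt_of_ne h with hl | hl
  · rw [av_add_of_lt v hl, min_eq_left hl.le]
  · rw [add_comm, av_add_of_lt v hl, min_eq_right hl.le]

lemma av_sum_le {ι : Type*} (s : Finset ι) (f : ι → F) {c : WithTop Γ}
    (h : ∀ i ∈ s, c ≤ v (f i)) : c ≤ v (∑ i ∈ s, f i) := by
  classical
  induction s using Finset.induction with
  | empty => simp [AddValuation.map_zero]
  | @insert j s hj ih =>
    rw [Finset.sum_insert hj]
    refine le_trans (le_min (h j (Finset.mem_insert_self j s)) (ih ?_)) (v.map_add _ _)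
    exact fun i hi => h i (Finset.mem_insert_of_mem hi)

/-- unique minimum gives exact value of sum -/
lemma av_sum_eq {ι : Type*} (s : Finset ι) (f : ι → F) (i₀ : ι) (hi₀ : i₀ ∈ s)
    (h : ∀ i ∈ s, i ≠ i₀ → v (f i₀) < v (f i)) : v (∑ i ∈ s, f i) = v (f i₀) := by
  classical
  rw [← Finset.add_sum_erase s f hi₀]
  by_cases htop : v (f i₀) = ⊤
  · have hz : ∀ i ∈ s.erase i₀, f i = 0 := by
      intro i hi
      rcases Finset.mem_erase.mp hi with ⟨hne, his⟩
      have := h i his hne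
      rw [htop] at this
      exact absurd this (not_top_lt)
    rw [Finset.sum_eq_zero hz, add_zero]
  · rcases WithTop.ne_top_iff_exists.mp htop with ⟨u, hu⟩
    have hrest : v (f i₀) < v (∑ i ∈ s.erase i₀, f i) := by
      by_cases hne : (s.erase i₀).Nonempty
      · have hinf : v (f i₀) < (s.erase i₀).inf (fun i => v (f i)) := by
          rw [Finset.lt_inf_iff (lt_top_iff_ne_top.mpr htop)]
          intro i hi
          rcases Finset.mem_erase.mp hi with ⟨hne', his⟩
          exact h i his hne'
        exact lt_of_lt_of_le hinf (av_sum_le v _ _ (fun i hi => Finset.inf_le hi))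
      · rw [Finset.not_nonempty_iff_eq_empty.mp hne]
        simp [AddValuation.map_zero, lt_top_iff_ne_top.mpr htop]
    rw [av_add_of_lt v hrest]

lemma av_multiset_prod (t : Multiset F) : v t.prod = (t.map (fun x => v x)).sum := by
  induction t using Multiset.induction with
  | empty => simp [AddValuation.map_one]
  | cons a t ih => simp [AddValuation.map_mul, ih]

lemma av_div_coe {x y : F} {ux uy : Γ} (hx : v x = (ux : WithTop Γ))
    (hy : v y = (uy : WithTop Γ)) : v (x / y) = ((ux - uy : Γ) : WithTop Γ) := by
  rw [div_eq_mul_inv, v.map_mul, v.map_inv, hx, hy, sub_eq_add_neg, WithTop.coe_add, coe_neg']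

end AV

variable {K : Type} [Field K] {Γ : Type} [AddCommGroup Γ] [LinearOrder Γ] [IsOrderedAddMonoid Γ]

lemma hasseDeriv_map' {R S : Type*} [CommSemiring R] [CommSemiring S] (φ : R →+* S)
    (k : ℕ) (f : R[X]) : hasseDeriv k (f.map φ) = (hasseDeriv k f).map φ := by
  ext n
  simp [hasseDeriv_coeff, coeff_map]

section Mono
variable (vbar : AddValuation (AlgebraicClosure K) (WithTop Γ))
  (W : AddValuation (RatFunc (AlgebraicClosure K)) (WithTop Γ))
  (a : AlgebraicClosure K) (γ : Γ)

lemma taylor_coeff_map (f : K[X]) (i : ℕ) :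
    (taylor a (f.map (algebraMap K (AlgebraicClosure K)))).coeff i
      = aeval a (hasseDeriv i f) := by
  rw [taylor_coeff, hasseDeriv_map', aeval_def, ← eval_map]

lemma W_C (hmon : IsMonomialVal vbar W a γ) (c : AlgebraicClosure K) :
    W (algebraMap _ _ (C c)) = vbar c := by
  have h := hmon (C c)
  rw [natDegree_C] at h
  rw [h]
  simp [Finset.range_one, taylor_C]

lemma W_gt (hmon : IsMonomialVal vbar W a γ) (N : Polynomial (AlgebraicClosure K))
    {c : WithTop Γ} (hc : c ≠ ⊤)
    (h : ∀ i : ℕ, c < vbar ((taylor a N).coeff i) + i • (γ : WithTop Γ)) :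
    c < W (algebraMap _ _ N) := by
  rw [hmon N]
  exact (Finset.lt_inf_iff (lt_top_iff_ne_top.mpr hc)).mpr (fun i _ => h i)

lemma W_attained (hmon : IsMonomialVal vbar W a γ) (N : Polynomial (AlgebraicClosure K)) :
    ∃ m ∈ Finset.range (N.natDegree + 1),
      W (algebraMap _ _ N) = vbar ((taylor a N).coeff m) + m • (γ : WithTop Γ) ∧
      ∀ i ∈ Finset.range (N.natDegree + 1),
        W (algebraMap _ _ N) ≤ vbar ((taylor a N).coeff i) + i • (γ : WithTop Γ) := by
  obtain ⟨m, hm, hval⟩ := Finset.exists_mem_eq_inf (Finset.range (N.natDegree + 1))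
    Finset.nonempty_range_add_one
    (fun i => vbar ((taylor a N).coeff i) + i • (γ : WithTop Γ))
  refine ⟨m, hm, ?_, ?_⟩
  · rw [hmon N]; exact hval
  · intro i hi
    rw [hmon N]
    exact Finset.inf_le hi

lemma W_X_sub_C (hmon : IsMonomialVal vbar W a γ) (b : AlgebraicClosure K) :
    W (algebraMap _ _ (X - C b)) = min (vbar (a - b)) (γ : WithTop Γ) := by
  have h := hmon (X - C b)
  rw [natDegree_X_sub_C] at h
  rw [h]
  rw [show (1 : ℕ) + 1 = 2 from rfl, Finset.range_add_one, Finset.range_one]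
  rw [Finset.inf_insert, Finset.inf_singleton]
  have h0 : (taylor a (X - C b)).coeff 0 = a - b := by
    rw [taylor_coeff]
    simp [hasseDeriv_zero']
  have h1 : (taylor a (X - C b)).coeff 1 = 1 := by
    rw [taylor_coeff]
    simp [hasseDeriv_one']
  rw [h0, h1]
  simp [AddValuation.map_one, min_comm]

lemma W_eval_of_roots_lt (hmon : IsMonomialVal vbar W a γ)
    {p : Polynomial (AlgebraicClosure K)} (hp : p ≠ 0)
    (hroots : ∀ b ∈ p.roots, vbar (a - b) < (γ : WithTop Γ)) :
    W (algebraMap _ _ p) = vbar (p.eval a) := by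
  have hsplit := IsAlgClosed.splits p
  have hfac := hsplit.eq_prod_roots
  conv_lhs => rw [hfac]
  conv_rhs => rw [hfac]
  rw [map_mul, W.map_mul, W_C vbar W a γ hmon]
  rw [eval_mul, eval_C, vbar.map_mul]
  congr 1
  rw [map_multiset_prod, av_multiset_prod, eval_multiset_prod, av_multiset_prod]
  rw [Multiset.map_map, Multiset.map_map, Multiset.map_map, Multiset.map_map]
  apply congrArg Multiset.sum
  apply Multiset.map_congr rfl
  intro b hb
  simp only [Function.comp_apply]
  rw [W_X_sub_C vbar W a γ hmon b, eval_sub, eval_X, eval_C]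
  exact min_eq_left (hroots b hb).le

lemma roots_lt (hmin : ∀ b : AlgebraicClosure K,
      (γ : WithTop Γ) ≤ vbar (a - b) → degOver K a ≤ degOver K b)
    {f : K[X]} (hf : f ≠ 0) (hdeg : f.natDegree < degOver K a)
    {b : AlgebraicClosure K}
    (hb : b ∈ (f.map (algebraMap K (AlgebraicClosure K))).roots) :
    vbar (a - b) < (γ : WithTop Γ) := by
  by_contra hle
  push_neg at hle
  have h1 := hmin b hle
  have hroot : aeval b f = 0 := by
    have := isRoot_of_mem_roots hb
    rwa [IsRoot.def, eval_map_algebraMap] at this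
  have h2 : (minpoly K b).natDegree ≤ f.natDegree :=
    natDegree_le_of_dvd (minpoly.dvd K b hroot) hf
  have : degOver K a ≤ f.natDegree := le_trans h1 h2
  omega

lemma W_small (hmon : IsMonomialVal vbar W a γ)
    (hmin : ∀ b : AlgebraicClosure K,
      (γ : WithTop Γ) ≤ vbar (a - b) → degOver K a ≤ degOver K b)
    {f : K[X]} (hf : f ≠ 0) (hdeg : f.natDegree < degOver K a) :
    W (algebraMap _ _ (f.map (algebraMap K (AlgebraicClosure K)))) = vbar (aeval a f) := by
  have hmap : f.map (algebraMap K (AlgebraicClosure K)) ≠ 0 :=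
    (Polynomial.map_ne_zero_iff (algebraMap K (AlgebraicClosure K)).injective).mpr hf
  rw [W_eval_of_roots_lt vbar W a γ hmon hmap
    (fun b hb => roots_lt vbar a γ hmin hf hdeg hb), ← eval_map_algebraMap]

end Mono

variable {K : Type} [Field K] {Γ : Type} [AddCommGroup Γ] [LinearOrder Γ] [IsOrderedAddMonoid Γ]

lemma av_zpow_coe {F : Type} [Field F] (v : AddValuation F (WithTop Γ)) {x : F} {u : Γ}
    (hx : v x = (u : WithTop Γ)) (n : ℤ) : v (x ^ n) = ((n • u : Γ) : WithTop Γ) := by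
  cases n with
  | ofNat k =>
    rw [Int.ofNat_eq_coe, zpow_natCast, v.map_pow, hx, coe_nsmul, WithTop.coe_inj,
      natCast_zsmul]
  | negSucc k =>
    rw [zpow_negSucc, v.map_inv, v.map_pow, hx, coe_nsmul, ← coe_neg', WithTop.coe_inj,
      negSucc_zsmul]

lemma liftRF_algebraMap (p : K[X]) :
    liftRF K (algebraMap K[X] (RatFunc K) p)
      = algebraMap _ _ (p.map (algebraMap K (AlgebraicClosure K))) := by
  have h1 : algebraMap K[X] (RatFunc K) p
      = algebraMap K[X] (RatFunc K) p / algebraMap K[X] (RatFunc K) 1 := by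
    rw [map_one, div_one]
  rw [h1]
  unfold liftRF
  rw [RatFunc.coe_mapRingHom_eq_coe_map, RatFunc.map_apply_div]
  simp [Polynomial.coe_mapRingHom]

lemma liftRF_const (c : K) :
    liftRF K (algebraMap K (RatFunc K) c)
      = algebraMap _ _ (C (algebraMap K (AlgebraicClosure K) c)) := by
  have h1 : algebraMap K (RatFunc K) c = algebraMap K[X] (RatFunc K) (C c) := by
    rw [RatFunc.algebraMap_apply]
    simp [Polynomial.algebraMap_apply]
  rw [h1, liftRF_algebraMap, map_C]

section Main
variable (vbar : AddValuation (AlgebraicClosure K) (WithTop Γ))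
  (ω : AddValuation (RatFunc K) (WithTop Γ))
  (W : AddValuation (RatFunc (AlgebraicClosure K)) (WithTop Γ))
  (a : AlgebraicClosure K) (γ : Γ)

lemma omega_poly (hWω : Extends (liftRF K) ω W) (p : K[X]) :
    ω (algebraMap K[X] (RatFunc K) p)
      = W (algebraMap _ _ (p.map (algebraMap K (AlgebraicClosure K)))) := by
  rw [← hWω, liftRF_algebraMap]

lemma omega_const (hmon : IsMonomialVal vbar W a γ) (hWω : Extends (liftRF K) ω W) (c : K) :
    ω (algebraMap K (RatFunc K) c) = vbar (algebraMap K (AlgebraicClosure K) c) := by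
  rw [← hWω, liftRF_const, W_C vbar W a γ hmon]

/-- The subgroup of `δ : Γ` which are torsion modulo the value group of `(K,ν)`. -/
def Tgrp : AddSubgroup Γ where
  carrier := {δ : Γ | ∃ m : ℤ, m ≠ 0 ∧ ∃ c : K, c ≠ 0 ∧
    ((m • δ : Γ) : WithTop Γ) = ω (algebraMap K (RatFunc K) c)}
  zero_mem' := by
    refine ⟨1, one_ne_zero, 1, one_ne_zero, ?_⟩
    rw [map_one, ω.map_one]
    simp
  neg_mem' := by
    rintro δ ⟨m, hm, c, hc, hval⟩
    refine ⟨m, hm, c⁻¹, inv_ne_zero hc, ?_⟩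
    rw [map_inv₀, ω.map_inv, ← hval, smul_neg, coe_neg']
  add_mem' := by
    rintro δ₁ δ₂ ⟨m₁, hm₁, c₁, hc₁, hval₁⟩ ⟨m₂, hm₂, c₂, hc₂, hval₂⟩
    refine ⟨m₁ * m₂, mul_ne_zero hm₁ hm₂, c₁ ^ m₂ * c₂ ^ m₁,
      mul_ne_zero (zpow_ne_zero _ hc₁) (zpow_ne_zero _ hc₂), ?_⟩
    rw [map_mul, ω.map_mul, map_zpow₀ (algebraMap K (RatFunc K)),
      map_zpow₀ (algebraMap K (RatFunc K)),
      av_zpow_coe ω hval₁.symm m₂, av_zpow_coe ω hval₂.symm m₁,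
      ← WithTop.coe_add, WithTop.coe_inj, smul_add, smul_smul, smul_smul, mul_comm m₂ m₁]

lemma Tgrp_smul_mem {δ : Γ} {m : ℤ} (hm : m ≠ 0) (h : m • δ ∈ Tgrp ω) : δ ∈ Tgrp ω := by
  rcases h with ⟨l, hl, c, hc, hval⟩
  exact ⟨l * m, mul_ne_zero hl hm, c, hc, by rwa [mul_smul]⟩

lemma vbar_algebraic_mem_T (hmon : IsMonomialVal vbar W a γ) (hWω : Extends (liftRF K) ω W)
    {κ : AlgebraicClosure K} (hκ : κ ≠ 0) :
    ∃ t : Γ, t ∈ Tgrp ω ∧ vbar κ = (t : WithTop Γ) := by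
  classical
  obtain ⟨t, ht⟩ := av_exists_coe vbar hκ
  refine ⟨t, ?_, ht⟩
  set φ := algebraMap K (AlgebraicClosure K)
  have hint : IsIntegral K κ := Algebra.IsIntegral.isIntegral κ
  set p := minpoly K κ with hp
  have hmonic : p.Monic := minpoly.monic hint
  have hc0 : p.coeff 0 ≠ 0 := minpoly.coeff_zero_ne_zero hint hκ
  have hndpos : 0 < p.natDegree := minpoly.natDegree_pos hint
  set n := p.natDegree
  set x : ℕ → AlgebraicClosure K := fun i => φ (p.coeff i) * κ ^ i with hx
  set S := (Finset.range (n + 1)).filter (fun i => p.coeff i ≠ 0) with hS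
  have hsum : ∑ i ∈ S, x i = 0 := by
    have h1 : ∑ i ∈ Finset.range (n + 1), x i = 0 := by
      have := minpoly.aeval K κ
      rw [aeval_eq_sum_range] at this
      rw [← this]
      exact Finset.sum_congr rfl (fun i _ => by rw [hx, Algebra.smul_def])
    rw [← h1]
    apply Finset.sum_filter_of_ne
    intro i _ hxi
    intro hco
    exact hxi (by rw [hx]; simp [hco])
  have h0S : 0 ∈ S := by
    simp only [hS, Finset.mem_filter, Finset.mem_range]
    exact ⟨by omega, hc0⟩
  have hnS : n ∈ S := by
    simp only [hS, Finset.mem_filter, Finset.mem_range]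
    exact ⟨by omega, by rw [hmonic.coeff_natDegree]; exact one_ne_zero⟩
  have hxne : ∀ i ∈ S, x i ≠ 0 := by
    intro i hi
    simp only [hS, Finset.mem_filter] at hi
    exact mul_ne_zero (fun h => hi.2 ((_root_.map_eq_zero φ).mp h)) (pow_ne_zero _ hκ)
  -- two indices in S with equal value
  have htie : ∃ i ∈ S, ∃ j ∈ S, i ≠ j ∧ vbar (x i) = vbar (x j) := by
    by_contra hcon
    push_neg at hcon
    obtain ⟨i₀, hi₀, hinf⟩ := Finset.exists_mem_eq_inf S ⟨0, h0S⟩ (fun i => vbar (x i))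
    have : vbar (∑ i ∈ S, x i) = vbar (x i₀) := by
      apply av_sum_eq vbar S x i₀ hi₀
      intro i hi hne
      have hle : vbar (x i₀) ≤ vbar (x i) := hinf ▸ Finset.inf_le hi
      exact lt_of_le_of_ne hle (fun h => hcon i hi i₀ hi₀ hne (by rw [h]))
    rw [hsum, vbar.map_zero] at this
    exact av_ne_top vbar (hxne i₀ hi₀) this.symm
  obtain ⟨i, hiS, j, hjS, hij, hvij⟩ := htie
  -- extract values
  have hciK : p.coeff i ≠ 0 := (Finset.mem_filter.mp hiS).2
  have hcjK : p.coeff j ≠ 0 := (Finset.mem_filter.mp hjS).2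
  obtain ⟨ui, hui⟩ := av_exists_coe vbar (show φ (p.coeff i) ≠ 0 from
    fun h => hciK ((_root_.map_eq_zero φ).mp h))
  obtain ⟨uj, huj⟩ := av_exists_coe vbar (show φ (p.coeff j) ≠ 0 from
    fun h => hcjK ((_root_.map_eq_zero φ).mp h))
  have hvi : vbar (x i) = ((ui + i • t : Γ) : WithTop Γ) := by
    rw [hx, vbar.map_mul, vbar.map_pow, hui, ht, coe_nsmul, ← WithTop.coe_add]
  have hvj : vbar (x j) = ((uj + j • t : Γ) : WithTop Γ) := by
    rw [hx, vbar.map_mul, vbar.map_pow, huj, ht, coe_nsmul, ← WithTop.coe_add]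
  rw [hvi, hvj, WithTop.coe_inj] at hvij
  -- (j - i) • t = ui - uj
  have hkey : ((j : ℤ) - (i : ℤ)) • t = ui - uj := by
    rw [sub_smul, natCast_zsmul, natCast_zsmul, sub_eq_sub_iff_add_eq_add, add_comm]
    exact hvij.symm
  refine Tgrp_smul_mem ω (m := (j : ℤ) - (i : ℤ))
    (by omega) ⟨1, one_ne_zero, p.coeff i / p.coeff j, div_ne_zero hciK hcjK, ?_⟩
  rw [one_smul, hkey, map_div₀, av_div_coe ω
    (by rw [omega_const vbar ω W a γ hmon hWω]; exact hui)
    (by rw [omega_const vbar ω W a γ hmon hWω]; exact huj)]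

end Main

variable {K : Type} [Field K] {Γ : Type} [AddCommGroup Γ] [LinearOrder Γ] [IsOrderedAddMonoid Γ]

section Main
variable (vbar : AddValuation (AlgebraicClosure K) (WithTop Γ))
  (ω : AddValuation (RatFunc K) (WithTop Γ))
  (W : AddValuation (RatFunc (AlgebraicClosure K)) (WithTop Γ))
  (a : AlgebraicClosure K) (γ : Γ)

lemma expansion (hmon : IsMonomialVal vbar W a γ) (hWω : Extends (liftRF K) ω W)
    {f : K[X]} (hf : f ≠ 0) :
    ∃ m : ℕ, m ≤ f.natDegree ∧ ∃ u : Γ, u ∈ Tgrp ω ∧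
      vbar (aeval a (hasseDeriv m f)) = (u : WithTop Γ) ∧
      ω (algebraMap K[X] (RatFunc K) f) = ((u + m • γ : Γ) : WithTop Γ) ∧
      (γ ∉ Tgrp ω → ∀ i : ℕ, i ≠ m →
        ((u + m • γ : Γ) : WithTop Γ)
          < vbar (aeval a (hasseDeriv i f)) + i • (γ : WithTop Γ)) := by
  set φ := algebraMap K (AlgebraicClosure K)
  set F := f.map φ with hFdef
  have hF : F ≠ 0 := (Polynomial.map_ne_zero_iff φ.injective).mpr hf
  have hdeg : F.natDegree = f.natDegree := natDegree_map φ
  have hapF : algebraMap _ (RatFunc (AlgebraicClosure K)) F ≠ 0 := by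
    rw [Ne, map_eq_zero_iff _ (RatFunc.algebraMap_injective _)]
    exact hF
  have hWne : W (algebraMap _ _ F) ≠ ⊤ := av_ne_top W hapF
  obtain ⟨m, hmr, hval, hinf⟩ := W_attained vbar W a γ hmon F
  rw [taylor_coeff_map] at hval
  have hmne : vbar (aeval a (hasseDeriv m f)) ≠ ⊤ := by
    intro h
    rw [h, top_add] at hval
    exact hWne hval
  have hmz : aeval a (hasseDeriv m f) ≠ 0 := fun h => hmne (by rw [h]; exact vbar.map_zero)
  obtain ⟨u, hu⟩ := av_exists_coe vbar hmz
  rw [hu, coe_nsmul, ← WithTop.coe_add] at hval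
  have huT : u ∈ Tgrp ω := by
    obtain ⟨t, htT, ht⟩ := vbar_algebraic_mem_T vbar ω W a γ hmon hWω
      (κ := aeval a (hasseDeriv m f)) hmz
    rw [hu, WithTop.coe_inj] at ht
    rwa [ht]
  refine ⟨m, by rw [hdeg, Finset.mem_range] at hmr; omega, u, huT, hu, ?_, ?_⟩
  · rw [omega_poly ω W hWω, hval]
  · intro hγ i him
    by_cases hz : aeval a (hasseDeriv i f) = 0
    · rw [hz, vbar.map_zero, top_add]
      exact WithTop.coe_lt_top _
    · obtain ⟨ui, hui⟩ := av_exists_coe vbar hz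
      rw [hui, coe_nsmul, ← WithTop.coe_add]
      by_cases hir : i ∈ Finset.range (F.natDegree + 1)
      · have hle := hinf i hir
        rw [taylor_coeff_map, hval, hui, coe_nsmul, ← WithTop.coe_add] at hle
        refine lt_of_le_of_ne hle ?_
        intro heq
        rw [WithTop.coe_inj] at heq
        have hkey : ((i : ℤ) - (m : ℤ)) • γ = u - ui := by
          rw [sub_smul, natCast_zsmul, natCast_zsmul, sub_eq_sub_iff_add_eq_add, add_comm]
          exact heq.symm
        obtain ⟨ti, htiT, hti⟩ := vbar_algebraic_mem_T vbar ω W a γ hmon hWω hz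
        have huiT : ui ∈ Tgrp ω := by
          rw [hui, WithTop.coe_inj] at hti
          rwa [hti]
        have : ((i : ℤ) - (m : ℤ)) • γ ∈ Tgrp ω := hkey ▸ sub_mem huT huiT
        exact hγ (Tgrp_smul_mem ω (by
          intro h
          apply him
          omega) this)
      · exfalso
        apply hz
        have : (taylor a F).natDegree < i := by
          rw [natDegree_taylor, hdeg]
          simp only [Finset.mem_range, hdeg] at hir
          omega
        rw [← taylor_coeff_map, coeff_eq_zero_of_natDegree_lt this]

lemma omega_poly_val_T (hmon : IsMonomialVal vbar W a γ) (hWω : Extends (liftRF K) ω W)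
    (hγ : γ ∈ Tgrp ω) {p : K[X]} (hp : p ≠ 0) :
    ∃ δ ∈ Tgrp ω, ω (algebraMap K[X] (RatFunc K) p) = (δ : WithTop Γ) := by
  obtain ⟨m, _, u, huT, _, hval, _⟩ := expansion vbar ω W a γ hmon hWω hp
  exact ⟨u + m • γ, add_mem huT (AddSubmonoid.nsmul_mem (Tgrp ω).toAddSubmonoid hγ m), hval⟩

lemma omega_val_T (hmon : IsMonomialVal vbar W a γ) (hWω : Extends (liftRF K) ω W)
    (hγ : γ ∈ Tgrp ω) {F : RatFunc K} (hF : F ≠ 0) {δ : Γ}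
    (hδ : ω F = (δ : WithTop Γ)) : δ ∈ Tgrp ω := by
  obtain ⟨δ₁, h1T, h1⟩ := omega_poly_val_T vbar ω W a γ hmon hWω hγ (RatFunc.num_ne_zero hF)
  obtain ⟨δ₂, h2T, h2⟩ := omega_poly_val_T vbar ω W a γ hmon hWω hγ (F.denom_ne_zero)
  have hdiv : ω F = ((δ₁ - δ₂ : Γ) : WithTop Γ) := by
    rw [← RatFunc.num_div_denom F, av_div_coe ω h1 h2]
  rw [hδ, WithTop.coe_inj] at hdiv
  rw [hdiv]
  exact sub_mem h1T h2T

lemma gamma_not_T (hmon : IsMonomialVal vbar W a γ) (hWω : Extends (liftRF K) ω W)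
    (hvt : IsValueTranscendental (algebraMap K (RatFunc K)) ω) : γ ∉ Tgrp ω := by
  intro hγ
  obtain ⟨f, γf, hf0, hωf, hnt⟩ := hvt.1
  obtain ⟨m, hm, c, hc, hval⟩ := omega_val_T vbar ω W a γ hmon hWω hγ hf0 hωf
  exact hnt m hm c hc hval

end Main

variable {K : Type} [Field K] {Γ : Type} [AddCommGroup Γ] [LinearOrder Γ] [IsOrderedAddMonoid Γ]

section Main
variable (vbar : AddValuation (AlgebraicClosure K) (WithTop Γ))
  (ω : AddValuation (RatFunc K) (WithTop Γ))
  (W : AddValuation (RatFunc (AlgebraicClosure K)) (WithTop Γ))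
  (a : AlgebraicClosure K) (γ : Γ)

lemma a_integral : IsIntegral K a := Algebra.IsIntegral.isIntegral a

lemma Q_monic : (minpoly K a).Monic := minpoly.monic (a_integral a)

lemma Q_ne_zero : minpoly K a ≠ 0 := (Q_monic a).ne_zero

lemma Q_deg_pos : 0 < (minpoly K a).natDegree := minpoly.natDegree_pos (a_integral a)

lemma Q_ne_one : minpoly K a ≠ 1 := by
  intro h
  have := Q_deg_pos a
  rw [h, natDegree_one] at this
  omega

/-- every element of `K(a)` is `h(a)` for some `h` of degree `< n`. -/
lemma adjoin_rep {b : AlgebraicClosure K}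
    (hb : b ∈ IntermediateField.adjoin K {a}) :
    ∃ h : K[X], h.natDegree < (minpoly K a).natDegree ∧ aeval a h = b := by
  have hb2 : b ∈ (IntermediateField.adjoin K {a}).toSubalgebra := hb
  rw [IntermediateField.adjoin_simple_toSubalgebra_of_isAlgebraic (a_integral a).isAlgebraic,
    Algebra.adjoin_singleton_eq_range_aeval] at hb2
  obtain ⟨g, hg⟩ := hb2
  have hg' : aeval a g = b := hg
  refine ⟨g %ₘ minpoly K a, natDegree_modByMonic_lt g (Q_monic a) (Q_ne_one a), ?_⟩
  rw [← hg']
  conv_rhs => rw [← modByMonic_add_div g (minpoly K a)]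
  rw [map_add, map_mul, minpoly.aeval, zero_mul, add_zero]

lemma aeval_mem_adjoin (h : K[X]) :
    aeval a h ∈ IntermediateField.adjoin K {a} := by
  have h1 : aeval a h ∈ Algebra.adjoin K {a} := Polynomial.aeval_mem_adjoin_singleton K a
  exact IntermediateField.algebra_adjoin_le_adjoin K {a} h1

/-- `aeval a h ≠ 0` for small nonzero `h`. -/
lemma aeval_small_ne_zero {h : K[X]} (hh : h ≠ 0)
    (hdeg : h.natDegree < (minpoly K a).natDegree) : aeval a h ≠ 0 := by
  intro h0
  have hdvd := minpoly.dvd K a h0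
  have := natDegree_le_of_dvd hdvd hh
  omega

lemma omega_small (hmon : IsMonomialVal vbar W a γ)
    (hmin : ∀ b : AlgebraicClosure K,
      (γ : WithTop Γ) ≤ vbar (a - b) → degOver K a ≤ degOver K b)
    (hWω : Extends (liftRF K) ω W) {h : K[X]} (hh : h ≠ 0)
    (hdeg : h.natDegree < (minpoly K a).natDegree) :
    ω (algebraMap K[X] (RatFunc K) h) = vbar (aeval a h) := by
  rw [omega_poly ω W hWω, W_small vbar W a γ hmon hmin hh hdeg]

/-- the value `γQ` of the minimal polynomial. -/
lemma gammaQ_spec (hmon : IsMonomialVal vbar W a γ) (hWω : Extends (liftRF K) ω W) :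
    ∃ γQ : Γ, ω (algebraMap K[X] (RatFunc K) (minpoly K a)) = (γQ : WithTop Γ) ∧
      ∃ u ∈ Tgrp ω, ∃ m : ℕ, 1 ≤ m ∧ γQ = u + m • γ := by
  obtain ⟨m, _, u, huT, huval, hval, _⟩ :=
    expansion vbar ω W a γ hmon hWω (Q_ne_zero a)
  refine ⟨u + m • γ, hval, u, huT, m, ?_, rfl⟩
  rcases Nat.eq_zero_or_pos m with rfl | h1
  · exfalso
    rw [hasseDeriv_zero', minpoly.aeval, vbar.map_zero] at huval
    exact (WithTop.coe_ne_top (a := u)) huval.symm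
  · exact h1

lemma gammaQ_not_T (hγT : γ ∉ Tgrp ω) {γQ u : Γ} (huT : u ∈ Tgrp ω) {m : ℕ} (hm : 1 ≤ m)
    (hQ : γQ = u + m • γ) : γQ ∉ Tgrp ω := by
  intro hQT
  apply hγT
  have : (m : ℤ) • γ ∈ Tgrp ω := by
    rw [natCast_zsmul]
    have : m • γ = γQ - u := by rw [hQ]; abel
    rw [this]
    exact sub_mem hQT huT
  exact Tgrp_smul_mem ω (by omega : (m : ℤ) ≠ 0) this

/-- `Q`-expansion: values of polynomials lie in `ν̄K(a) + ℕ γQ`. -/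
lemma poly_val_form (hmon : IsMonomialVal vbar W a γ)
    (hmin : ∀ b : AlgebraicClosure K,
      (γ : WithTop Γ) ≤ vbar (a - b) → degOver K a ≤ degOver K b)
    (hWω : Extends (liftRF K) ω W)
    {γQ : Γ} (hQval : ω (algebraMap K[X] (RatFunc K) (minpoly K a)) = (γQ : WithTop Γ))
    (hγQT : γQ ∉ Tgrp ω) :
    ∀ N : ℕ, ∀ p : K[X], p.natDegree ≤ N → p ≠ 0 →
      ∃ α : Γ, (∃ b ∈ IntermediateField.adjoin K {a}, b ≠ 0 ∧ vbar b = (α : WithTop Γ)) ∧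
        ∃ j : ℕ, ω (algebraMap K[X] (RatFunc K) p) = ((α + j • γQ : Γ) : WithTop Γ) := by
  intro N
  induction N using Nat.strong_induction_on with
  | _ N ih =>
    intro p hpN hp
    by_cases hsmall : p.natDegree < (minpoly K a).natDegree
    · obtain ⟨α, hα⟩ := av_exists_coe vbar (aeval_small_ne_zero a hp hsmall)
      refine ⟨α, ⟨aeval a p, aeval_mem_adjoin a p, aeval_small_ne_zero a hp hsmall, hα⟩, 0, ?_⟩
      rw [omega_small vbar ω W a γ hmon hmin hWω hp hsmall, hα, WithTop.coe_inj]
      norm_num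
    · push_neg at hsmall
      set Q := minpoly K a
      set q := p /ₘ Q with hq
      set r := p %ₘ Q with hr
      have hqne : q ≠ 0 := by
        rw [hq, Ne, divByMonic_eq_zero_iff (Q_monic a)]
        push_neg
        rw [degree_eq_natDegree hp, degree_eq_natDegree (Q_ne_zero a)]
        exact_mod_cast hsmall
      have hqdeg : q.natDegree = p.natDegree - Q.natDegree := natDegree_divByMonic p (Q_monic a)
      have hQpos : 0 < Q.natDegree := Q_deg_pos a
      obtain ⟨α, hαwit, j, hjval⟩ := ih q.natDegree (by omega) q le_rfl hqne
      have hqQ : ω (algebraMap K[X] (RatFunc K) (Q * q))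
          = ((α + (j + 1) • γQ : Γ) : WithTop Γ) := by
        rw [map_mul, ω.map_mul, hQval, hjval, ← WithTop.coe_add, WithTop.coe_inj]
        rw [succ_nsmul]
        abel
      have hsplit : p = r + Q * q := (modByMonic_add_div p Q).symm
      by_cases hrz : r = 0
      · refine ⟨α, hαwit, j + 1, ?_⟩
        rw [hsplit, hrz, zero_add, hqQ]
      · have hrdeg : r.natDegree < Q.natDegree := natDegree_modByMonic_lt p (Q_monic a) (Q_ne_one a)
        have hrne : aeval a r ≠ 0 := aeval_small_ne_zero a hrz hrdeg
        obtain ⟨α', hα'⟩ := av_exists_coe vbar hrne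
        have hrval : ω (algebraMap K[X] (RatFunc K) r) = (α' : WithTop Γ) := by
          rw [omega_small vbar ω W a γ hmon hmin hWω hrz hrdeg, hα']
        have hne : ω (algebraMap K[X] (RatFunc K) r)
            ≠ ω (algebraMap K[X] (RatFunc K) (Q * q)) := by
          rw [hrval, hqQ]
          intro heq
          rw [WithTop.coe_inj] at heq
          apply hγQT
          have hαT : α ∈ Tgrp ω := by
            obtain ⟨b, _, hb0, hbα⟩ := hαwit
            obtain ⟨t, htT, ht⟩ := vbar_algebraic_mem_T vbar ω W a γ hmon hWω hb0
            rw [hbα, WithTop.coe_inj] at ht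
            rwa [ht]
          have hα'T : α' ∈ Tgrp ω := by
            obtain ⟨t, htT, ht⟩ := vbar_algebraic_mem_T vbar ω W a γ hmon hWω hrne
            rw [hα', WithTop.coe_inj] at ht
            rwa [ht]
          have hsm : ((j + 1 : ℕ) : ℤ) • γQ ∈ Tgrp ω := by
            rw [natCast_zsmul]
            have : (j + 1) • γQ = α' - α := by
              rw [heq]; abel
            rw [this]
            exact sub_mem hα'T hαT
          exact Tgrp_smul_mem ω (by omega : ((j + 1 : ℕ) : ℤ) ≠ 0) hsm
        have hmin' : ω (algebraMap K[X] (RatFunc K) p)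
            = min (ω (algebraMap K[X] (RatFunc K) r)) (ω (algebraMap K[X] (RatFunc K) (Q * q))) := by
          rw [hsplit, map_add]
          exact av_add_ne ω hne
        rcases min_cases (ω (algebraMap K[X] (RatFunc K) r))
            (ω (algebraMap K[X] (RatFunc K) (Q * q))) with ⟨hc, _⟩ | ⟨hc, _⟩
        · refine ⟨α', ⟨aeval a r, aeval_mem_adjoin a r, hrne, hα'⟩, 0, ?_⟩
          rw [hmin', hc, hrval]
          norm_num
        · exact ⟨α, hαwit, j + 1, by rw [hmin', hc, hqQ]⟩

end Main

variable {K : Type} [Field K] {Γ : Type} [AddCommGroup Γ] [LinearOrder Γ] [IsOrderedAddMonoid Γ]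

lemma ap_const (b : AlgebraicClosure K) :
    algebraMap (AlgebraicClosure K) (RatFunc (AlgebraicClosure K)) b
      = algebraMap _ _ (C b) := by
  rw [RatFunc.algebraMap_apply, map_one, div_one, Polynomial.algebraMap_eq]

section Main
variable (vbar : AddValuation (AlgebraicClosure K) (WithTop Γ))
  (ω : AddValuation (RatFunc K) (WithTop Γ))
  (W : AddValuation (RatFunc (AlgebraicClosure K)) (WithTop Γ))
  (a : AlgebraicClosure K) (γ : Γ)

/-- for small `h`, the minimal index is `0` and all other terms are strictly bigger. -/
lemma small_expansion_zero (hmon : IsMonomialVal vbar W a γ)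
    (hmin : ∀ b : AlgebraicClosure K,
      (γ : WithTop Γ) ≤ vbar (a - b) → degOver K a ≤ degOver K b)
    (hWω : Extends (liftRF K) ω W) (hγT : γ ∉ Tgrp ω)
    {h : K[X]} (hh : h ≠ 0) (hdeg : h.natDegree < (minpoly K a).natDegree) :
    ∃ u : Γ, vbar (aeval a h) = (u : WithTop Γ) ∧
      ω (algebraMap K[X] (RatFunc K) h) = (u : WithTop Γ) ∧
      ∀ i : ℕ, i ≠ 0 →
        (u : WithTop Γ) < vbar (aeval a (hasseDeriv i h)) + i • (γ : WithTop Γ) := by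
  obtain ⟨m, _, u', hu'T, hu'val, hval, huniq⟩ := expansion vbar ω W a γ hmon hWω hh
  have hm0 : m = 0 := by
    by_contra hm
    have h1 := huniq hγT 0 (fun h => hm h.symm)
    rw [hasseDeriv_zero'] at h1
    have h2 : ω (algebraMap K[X] (RatFunc K) h) = vbar (aeval a h) :=
      omega_small vbar ω W a γ hmon hmin hWω hh hdeg
    rw [hval] at h2
    simp only [zero_smul, add_zero] at h1
    rw [← h2] at h1
    exact lt_irrefl _ h1
  subst hm0
  refine ⟨u', ?_, ?_, ?_⟩
  · rwa [hasseDeriv_zero'] at hu'val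
  · rw [hval]
    norm_num
  · intro i hi
    have := huniq hγT i hi
    simpa using this

/-- Second component of `SameResidues`: residues of `K(a)` are residues of `K(x)`. -/
lemma residue_dir2 (hmon : IsMonomialVal vbar W a γ)
    (hmin : ∀ b : AlgebraicClosure K,
      (γ : WithTop Γ) ≤ vbar (a - b) → degOver K a ≤ degOver K b)
    (hWω : Extends (liftRF K) ω W) (hγT : γ ∉ Tgrp ω) :
    ∀ g ∈ (algebraMap (AlgebraicClosure K) (RatFunc (AlgebraicClosure K))) ''
        (IntermediateField.adjoin K {a} : Set (AlgebraicClosure K)),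
      0 ≤ W g → ∃ f ∈ Set.range (liftRF K), 0 ≤ W f ∧ 0 < W (g - f) := by
  rintro g ⟨b, hbmem, rfl⟩ hge
  rw [ap_const] at *
  by_cases h0 : 0 < W (algebraMap _ _ (C b))
  · refine ⟨0, ⟨0, map_zero _⟩, ?_, ?_⟩
    · rw [W.map_zero]; exact le_top
    · rwa [sub_zero]
  · have hWb : W (algebraMap _ _ (C b)) = 0 := le_antisymm (not_lt.mp h0) hge
    rw [W_C vbar W a γ hmon] at hWb
    have hb0 : b ≠ 0 := by
      intro hb
      rw [hb, vbar.map_zero] at hWb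
      exact (by simp : (⊤ : WithTop Γ) ≠ 0) hWb
    obtain ⟨h, hhdeg, hhval⟩ := adjoin_rep a hbmem
    have hh0 : h ≠ 0 := by
      intro hz
      rw [hz, map_zero] at hhval
      exact hb0 hhval.symm
    obtain ⟨u, hu1, hu2, hu3⟩ :=
      small_expansion_zero vbar ω W a γ hmon hmin hWω hγT hh0 hhdeg
    have hu0 : u = 0 := by
      rw [hhval, hWb] at hu1
      exact_mod_cast hu1.symm
    subst hu0
    refine ⟨liftRF K (algebraMap K[X] (RatFunc K) h), ⟨_, rfl⟩, ?_, ?_⟩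
    · rw [hWω]
      rw [hu2]
      norm_num
    · rw [liftRF_algebraMap, ← map_sub]
      apply W_gt vbar W a γ hmon _ (by simp : (0 : WithTop Γ) ≠ ⊤)
      intro i
      rw [map_sub (taylor a)]
      rcases Nat.eq_zero_or_pos i with rfl | hi
      · have hc : ((taylor a) (C b) - (taylor a) (h.map (algebraMap K (AlgebraicClosure K)))).coeff 0 = 0 := by
          rw [coeff_sub, taylor_C, coeff_C, taylor_coeff_map, hasseDeriv_zero']
          simp [hhval]
        rw [hc, vbar.map_zero, top_add]
        exact WithTop.coe_lt_top 0
      · have hc : ((taylor a) (C b) - (taylor a) (h.map (algebraMap K (AlgebraicClosure K)))).coeff i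
            = -(aeval a (hasseDeriv i h)) := by
          rw [coeff_sub, taylor_C, coeff_C, taylor_coeff_map]
          simp [Nat.pos_iff_ne_zero.mp hi]
        rw [hc, vbar.map_neg]
        have := hu3 i (by omega)
        simpa using this

/-- First component of `SameResidues`: residues of `K(x)` are residues of `K(a)`. -/
lemma residue_dir1 (hmon : IsMonomialVal vbar W a γ)
    (hmin : ∀ b : AlgebraicClosure K,
      (γ : WithTop Γ) ≤ vbar (a - b) → degOver K a ≤ degOver K b)
    (hWω : Extends (liftRF K) ω W) (hγT : γ ∉ Tgrp ω) :
    ∀ f ∈ Set.range (liftRF K), 0 ≤ W f →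
      ∃ g ∈ (algebraMap (AlgebraicClosure K) (RatFunc (AlgebraicClosure K))) ''
          (IntermediateField.adjoin K {a} : Set (AlgebraicClosure K)),
        0 ≤ W g ∧ 0 < W (f - g) := by
  rintro f ⟨F, rfl⟩ hge
  by_cases h0 : 0 < W (liftRF K F)
  · refine ⟨0, ⟨0, ?_, map_zero _⟩, ?_, ?_⟩
    · exact zero_mem _
    · rw [W.map_zero]; exact le_top
    · rwa [sub_zero]
  · have hWF : W (liftRF K F) = 0 := le_antisymm (not_lt.mp h0) hge
    have hF : F ≠ 0 := by
      intro hz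
      rw [hz, map_zero, W.map_zero] at hWF
      exact (by simp : (⊤ : WithTop Γ) ≠ 0) hWF
    set p := F.num with hp
    set q := F.denom with hqdef
    have hpne : p ≠ 0 := RatFunc.num_ne_zero hF
    have hqne : q ≠ 0 := F.denom_ne_zero
    obtain ⟨mp, _, up, hupT, hcp, hvp, huniqp⟩ := expansion vbar ω W a γ hmon hWω hpne
    obtain ⟨mq, _, uq, huqT, hcq, hvq, huniqq⟩ := expansion vbar ω W a γ hmon hWω hqne
    -- ω (alg p) = ω F + ω (alg q)
    have hqne' : algebraMap K[X] (RatFunc K) q ≠ 0 := RatFunc.algebraMap_ne_zero hqne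
    have hFq : F * algebraMap K[X] (RatFunc K) q = algebraMap K[X] (RatFunc K) p := by
      conv_lhs => rw [← RatFunc.num_div_denom F]
      exact div_mul_cancel₀ _ hqne'
    have hrel : ((up + mp • γ : Γ) : WithTop Γ) = ((uq + mq • γ : Γ) : WithTop Γ) := by
      rw [← hvp, ← hvq, ← hFq, ω.map_mul, ← hWω F, hWF, zero_add]
    rw [WithTop.coe_inj] at hrel
    have hmm : mp = mq := by
      by_contra hne
      apply hγT
      have hsm : ((mp : ℤ) - (mq : ℤ)) • γ ∈ Tgrp ω := by
        have heq : ((mp : ℤ) - (mq : ℤ)) • γ = uq - up := by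
          rw [sub_smul, natCast_zsmul, natCast_zsmul, sub_eq_sub_iff_add_eq_add, add_comm]
          exact hrel
        rw [heq]
        exact sub_mem huqT hupT
      exact Tgrp_smul_mem ω (by omega : ((mp : ℤ) - (mq : ℤ)) ≠ 0) hsm
    subst hmm
    have hupq : up = uq := by
      have := hrel
      exact add_right_cancel this
    set cp := aeval a (hasseDeriv mp p) with hcpdef
    set cq := aeval a (hasseDeriv mp q) with hcqdef
    have hcp0 : cp ≠ 0 := fun hz => by
      rw [hz, vbar.map_zero] at hcp; exact (WithTop.coe_ne_top (a := up)) hcp.symm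
    have hcq0 : cq ≠ 0 := fun hz => by
      rw [hz, vbar.map_zero] at hcq; exact (WithTop.coe_ne_top (a := uq)) hcq.symm
    set g₀ := cp / cq with hg₀
    have hg₀mem : g₀ ∈ IntermediateField.adjoin K {a} :=
      div_mem (aeval_mem_adjoin a _) (aeval_mem_adjoin a _)
    have hg₀val : vbar g₀ = 0 := by
      rw [hg₀, av_div_coe vbar hcp hcq, hupq]
      simp
    refine ⟨algebraMap _ _ g₀, ⟨g₀, hg₀mem, rfl⟩, ?_, ?_⟩
    · rw [ap_const, W_C vbar W a γ hmon, hg₀val]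
    · -- main estimate
      set φ := algebraMap K (AlgebraicClosure K)
      set N : Polynomial (AlgebraicClosure K) := p.map φ - C g₀ * q.map φ with hN
      have hident : (liftRF K F - algebraMap _ _ (C g₀)) *
          algebraMap _ _ (q.map φ) = algebraMap _ _ N := by
        have h1 : liftRF K F * algebraMap _ _ (q.map φ) = algebraMap _ _ (p.map φ) := by
          rw [← liftRF_algebraMap, ← liftRF_algebraMap, ← map_mul, hFq]
        rw [sub_mul, h1, hN, map_sub, map_mul]
      have hWq : W (algebraMap _ _ (q.map φ)) = ((uq + mp • γ : Γ) : WithTop Γ) := by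
        rw [← omega_poly ω W hWω, hvq]
      have hbound : ((uq + mp • γ : Γ) : WithTop Γ) < W (algebraMap _ _ N) := by
        apply W_gt vbar W a γ hmon _ (WithTop.coe_ne_top)
        intro i
        have hcoeff : (taylor a N).coeff i
            = aeval a (hasseDeriv i p) - g₀ * aeval a (hasseDeriv i q) := by
          rw [hN, map_sub (taylor a), taylor_mul, taylor_C, coeff_sub, coeff_C_mul,
            taylor_coeff_map, taylor_coeff_map]
        rcases eq_or_ne i mp with rfl | hi
        · rw [hcoeff, ← hcpdef, ← hcqdef, hg₀, div_mul_cancel₀ _ hcq0, sub_self,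
            vbar.map_zero, top_add]
          exact WithTop.coe_lt_top _
        · have hb1 : ((uq + mp • γ : Γ) : WithTop Γ)
              < vbar (aeval a (hasseDeriv i p)) + i • (γ : WithTop Γ) := by
            rw [← hupq]
            rw [← hupq] at hrel
            exact huniqp hγT i hi
          have hb2 : ((uq + mp • γ : Γ) : WithTop Γ)
              < vbar (g₀ * aeval a (hasseDeriv i q)) + i • (γ : WithTop Γ) := by
            rw [vbar.map_mul, hg₀val, zero_add]
            exact huniqq hγT i hi
          rw [hcoeff]
          have hsub : min (vbar (aeval a (hasseDeriv i p)))
              (vbar (g₀ * aeval a (hasseDeriv i q)))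
              ≤ vbar (aeval a (hasseDeriv i p) - g₀ * aeval a (hasseDeriv i q)) :=
            vbar.map_sub _ _
          rcases min_cases (vbar (aeval a (hasseDeriv i p)))
              (vbar (g₀ * aeval a (hasseDeriv i q))) with ⟨hmc, _⟩ | ⟨hmc, _⟩
          · refine lt_of_lt_of_le hb1 (add_le_add_left ?_ _)
            rw [← hmc]; exact hsub
          · refine lt_of_lt_of_le hb2 (add_le_add_left ?_ _)
            rw [← hmc]; exact hsub
      by_contra hcon
      push_neg at hcon
      rw [ap_const] at hcon
      have h1 : W ((liftRF K F - algebraMap _ _ (C g₀)) * algebraMap _ _ (q.map φ))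
          ≤ ((uq + mp • γ : Γ) : WithTop Γ) := by
        rw [W.map_mul, hWq]
        calc W (liftRF K F - algebraMap _ _ (C g₀)) + ((uq + mp • γ : Γ) : WithTop Γ)
            ≤ 0 + ((uq + mp • γ : Γ) : WithTop Γ) := add_le_add_left hcon _
          _ = ((uq + mp • γ : Γ) : WithTop Γ) := zero_add _
      rw [hident] at h1
      exact absurd (lt_of_lt_of_le hbound h1) (lt_irrefl _)

end Main

end Aux

/-- Remark: value group and residue field of a value transcendental
extension.  Let `ω` be a value transcendental extension of `ν` to `K(x)` with minimal
pair of definition `(a,γ)` (realized by `W = ω̄ = ν̄_{a,γ}`) and `Q = minpoly K a`.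
Then `ωK(x)` is the internal direct sum `ν̄K(a) ⊕ ℤ·ωQ` (a sup of subgroups of `Γ`
with trivial intersection), and the residue field of `(K(x),ω)` coincides with the
residue field of `(K(a),ν̄)` (both computed inside the residue field of `(K̄(x),ω̄)`). -/
theorem statement_7 {K : Type} [Field K] {Γ : Type} [AddCommGroup Γ] [LinearOrder Γ] [IsOrderedAddMonoid Γ]
    (vbar : AddValuation (AlgebraicClosure K) (WithTop Γ))
    (ω : AddValuation (RatFunc K) (WithTop Γ))
    (hvt : IsValueTranscendental (algebraMap K (RatFunc K)) ω)
    (a : AlgebraicClosure K) (γ : Γ)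
    (W : AddValuation (RatFunc (AlgebraicClosure K)) (WithTop Γ))
    (hW : IsMinimalPairFor vbar W a γ)
    (hWω : Extends (liftRF K) ω W) :
    ∃ γQ : Γ,
      ω (algebraMap (Polynomial K) (RatFunc K) (minpoly K a)) = (γQ : WithTop Γ) ∧
      valueSubgroup ω (Set.univ) =
        valueSubgroup vbar (IntermediateField.adjoin K {a} : Set (AlgebraicClosure K)) ⊔
          AddSubgroup.closure {γQ} ∧
      valueSubgroup vbar (IntermediateField.adjoin K {a} : Set (AlgebraicClosure K)) ⊓
          AddSubgroup.closure {γQ} = ⊥ ∧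
      SameResidues W (Set.range (liftRF K))
        ((algebraMap (AlgebraicClosure K) (RatFunc (AlgebraicClosure K))) ''
          (IntermediateField.adjoin K {a} : Set (AlgebraicClosure K))) := by
  obtain ⟨hmon, hmin⟩ := hW
  have hγT : γ ∉ Tgrp ω := gamma_not_T vbar ω W a γ hmon hWω hvt
  obtain ⟨γQ, hQval, u, huT, m, hm1, hQeq⟩ := gammaQ_spec vbar ω W a γ hmon hWω
  have hγQT : γQ ∉ Tgrp ω := gammaQ_not_T ω γ hγT huT hm1 hQeq
  have hA'T : valueSubgroup vbar
      (IntermediateField.adjoin K {a} : Set (AlgebraicClosure K)) ≤ Tgrp ω := by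
    apply (AddSubgroup.closure_le _).mpr
    rintro δ ⟨b, hb, hb0, hval⟩
    obtain ⟨t, htT, ht⟩ := vbar_algebraic_mem_T vbar ω W a γ hmon hWω hb0
    rw [hval, WithTop.coe_inj] at ht
    rw [ht]
    exact htT
  refine ⟨γQ, hQval, ?_, ?_, ?_, ?_⟩
  · -- value group equality
    apply le_antisymm
    · apply (AddSubgroup.closure_le _).mpr
      rintro δ ⟨f, -, hf0, hδ⟩
      have hpne : f.num ≠ 0 := RatFunc.num_ne_zero hf0
      have hqne : f.denom ≠ 0 := f.denom_ne_zero
      obtain ⟨α₁, ⟨b₁, hb₁, hb₁0, hb₁v⟩, j₁, hval₁⟩ :=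
        poly_val_form vbar ω W a γ hmon hmin hWω hQval hγQT f.num.natDegree f.num le_rfl hpne
      obtain ⟨α₂, ⟨b₂, hb₂, hb₂0, hb₂v⟩, j₂, hval₂⟩ :=
        poly_val_form vbar ω W a γ hmon hmin hWω hQval hγQT f.denom.natDegree f.denom le_rfl hqne
      have hδeq : δ = (α₁ + j₁ • γQ) - (α₂ + j₂ • γQ) := by
        have hdiv := av_div_coe ω hval₁ hval₂
        rw [RatFunc.num_div_denom f, hδ, WithTop.coe_inj] at hdiv
        exact hdiv
      rw [hδeq]
      apply sub_mem
      · exact add_mem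
          (AddSubgroup.mem_sup_left (AddSubgroup.subset_closure ⟨b₁, hb₁, hb₁0, hb₁v⟩))
          (AddSubgroup.mem_sup_right
            (AddSubgroup.mem_closure_singleton.mpr ⟨(j₁ : ℤ), by rw [natCast_zsmul]⟩))
      · exact add_mem
          (AddSubgroup.mem_sup_left (AddSubgroup.subset_closure ⟨b₂, hb₂, hb₂0, hb₂v⟩))
          (AddSubgroup.mem_sup_right
            (AddSubgroup.mem_closure_singleton.mpr ⟨(j₂ : ℤ), by rw [natCast_zsmul]⟩))
    · apply sup_le
      · apply (AddSubgroup.closure_le _).mpr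
        rintro δ ⟨b, hb, hb0, hδ⟩
        obtain ⟨h, hdeg, hval⟩ := adjoin_rep a hb
        have hh0 : h ≠ 0 := fun hz => hb0 (by rw [← hval, hz, map_zero])
        apply AddSubgroup.subset_closure
        refine ⟨algebraMap K[X] (RatFunc K) h, Set.mem_univ _,
          RatFunc.algebraMap_ne_zero hh0, ?_⟩
        rw [omega_small vbar ω W a γ hmon hmin hWω hh0 hdeg, hval, hδ]
      · apply (AddSubgroup.closure_le _).mpr
        rintro δ hδ
        rw [Set.mem_singleton_iff] at hδ
        subst hδ
        apply AddSubgroup.subset_closure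
        exact ⟨algebraMap K[X] (RatFunc K) (minpoly K a), Set.mem_univ _,
          RatFunc.algebraMap_ne_zero (Q_ne_zero a), hQval⟩
  · -- trivial intersection
    rw [eq_bot_iff]
    rintro δ hδ
    rw [AddSubgroup.mem_inf] at hδ
    obtain ⟨h1, h2⟩ := hδ
    obtain ⟨k, hk⟩ := AddSubgroup.mem_closure_singleton.mp h2
    rcases eq_or_ne k 0 with rfl | hk0
    · rw [AddSubgroup.mem_bot, ← hk, zero_smul]
    · exfalso
      apply hγQT
      exact Tgrp_smul_mem ω hk0 (hk ▸ hA'T h1)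
  · exact residue_dir1 vbar ω W a γ hmon hmin hWω hγT
  · exact residue_dir2 vbar ω W a γ hmon hmin hWω hγT


end VT
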